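/- Let S : ℝ₊ × D → D be a Lipschitz semigroup on a metric space (D, d) with Lipschitz constant L (i.e. d(S_t u, S_t u') ≤ L·d(u, u') and d(S_t u, S_s u) ≤ L·|t − s| for all u, u' ∈ D, s, t ≥ 0, plus the semigroup property). Let w : [0,T] → D be Lipschitz continuous. Then d(w(t), S_t w(0)) ≤ L·∫₀ᵗ liminf_{h→0+} (1/h)·d(w(s+h), S_h w(s)) ds for every t ∈ [0,T]. -/

import Mathlib

open Set Filter

open MeasureTheory

lemma aux_liminf_rep (Q : ℝ → ℝ) (C : ℝ)
    (hQc : ContinuousOn Q (Ioi 0))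
    (hQ0 : ∀ h, 0 < h → 0 ≤ Q h) (hQC : ∀ h, 0 < h → Q h ≤ C) :
    liminf Q (nhdsWithin 0 (Ioi 0)) =
      ⨆ n : ℕ, ⨅ p : ℚ, if 0 < (p:ℝ) ∧ (p:ℝ) < 1/((n:ℝ)+1) then Q p else C + 1 := by
  have hC0 : 0 ≤ C := le_trans (hQ0 1 one_pos) (hQC 1 one_pos)
  set ψ : ℕ → ℚ → ℝ := fun n p => if 0 < (p:ℝ) ∧ (p:ℝ) < 1/((n:ℝ)+1) then Q p else C + 1 with hψ
  set F : ℕ → ℝ := fun n => ⨅ p : ℚ, ψ n p with hF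
  have hψ_nonneg : ∀ n p, 0 ≤ ψ n p := by
    intro n p
    by_cases hc : 0 < (p:ℝ) ∧ (p:ℝ) < 1/((n:ℝ)+1)
    · simp only [hψ]; rw [if_pos hc]; exact hQ0 _ hc.1
    · simp only [hψ]; rw [if_neg hc]; linarith
  have hψ_le : ∀ n p, ψ n p ≤ C + 1 := by
    intro n p
    by_cases hc : 0 < (p:ℝ) ∧ (p:ℝ) < 1/((n:ℝ)+1)
    · simp only [hψ]; rw [if_pos hc]; linarith [hQC _ hc.1]
    · simp only [hψ]; rw [if_neg hc]
  have hbdd : ∀ n, BddBelow (range (ψ n)) := fun n => ⟨0, by rintro x ⟨p, rfl⟩; exact hψ_nonneg n p⟩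
  set A : Set ℝ := {a | ∀ᶠ h in nhdsWithin 0 (Ioi 0), a ≤ Q h} with hA
  have hA0 : (0:ℝ) ∈ A := by
    filter_upwards [self_mem_nhdsWithin] with h hh
    exact hQ0 h hh
  have hAub : ∀ a ∈ A, a ≤ C := by
    intro a ha
    have ha' : ∀ᶠ h in nhdsWithin (0:ℝ) (Ioi 0), a ≤ Q h := ha
    obtain ⟨h, hh1, hh2⟩ := (ha'.and self_mem_nhdsWithin).exists
    exact hh1.trans (hQC h hh2)
  have hFA : ∀ n, F n ∈ A := by
    intro n
    have hn : (0:ℝ) < 1/((n:ℝ)+1) := by positivity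
    have hIoo : Ioo (0:ℝ) (1/((n:ℝ)+1)) ∈ nhdsWithin 0 (Ioi 0) :=
      Ioo_mem_nhdsGT_of_mem ⟨le_rfl, hn⟩
    filter_upwards [hIoo] with h hh
    refine le_of_forall_pos_le_add (fun ε hε => ?_)
    have hcont := hQc h hh.1
    rw [Metric.continuousWithinAt_iff] at hcont
    obtain ⟨δ, hδ, hδ'⟩ := hcont ε hε
    obtain ⟨p, hp1, hp2⟩ := exists_rat_btwn (show max (h - δ) 0 < h by
      simp only [max_lt_iff]; exact ⟨by linarith, hh.1⟩)
    have hp0 : 0 < (p:ℝ) := (le_max_right _ _).trans_lt hp1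
    have hpn : (p:ℝ) < 1/((n:ℝ)+1) := hp2.trans hh.2
    have hdist : dist (p:ℝ) h < δ := by
      rw [Real.dist_eq, abs_of_nonpos (by linarith)]
      have := (le_max_left (h - δ) 0).trans_lt hp1
      linarith
    have := hδ' hp0 hdist
    rw [Real.dist_eq] at this
    have hQp : Q p ≤ Q h + ε := by
      have := abs_lt.1 this
      linarith [this.2]
    calc F n ≤ ψ n p := ciInf_le (hbdd n) p
      _ = Q p := by simp only [hψ]; rw [if_pos ⟨hp0, hpn⟩]
      _ ≤ Q h + ε := hQp
  have hFle : ∀ n, F n ≤ C + 1 := by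
    intro n
    refine (ciInf_le (hbdd n) (0:ℚ)).trans_eq ?_
    simp [hψ]
  have hbddF : BddAbove (range F) := ⟨C + 1, by rintro x ⟨n, rfl⟩; exact hFle n⟩
  rw [liminf_eq]
  apply le_antisymm
  · refine csSup_le ⟨0, hA0⟩ (fun a ha => ?_)
    obtain ⟨u, hu, hsub⟩ := mem_nhdsGT_iff_exists_Ioo_subset.1 ha
    obtain ⟨n, hn⟩ := exists_nat_one_div_lt (mem_Ioi.1 hu)
    have haF : a ≤ F n := by
      refine le_ciInf (fun p => ?_)
      by_cases hc : 0 < (p:ℝ) ∧ (p:ℝ) < 1/((n:ℝ)+1)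
      · have hpu : (p:ℝ) ∈ Ioo 0 u := ⟨hc.1, hc.2.trans hn⟩
        simp only [hψ]; rw [if_pos hc]; exact hsub hpu
      · simp only [hψ]; rw [if_neg hc]
        have hu2 : u/2 ∈ Ioo (0:ℝ) u := ⟨half_pos hu, half_lt_self hu⟩
        have := hsub hu2
        have := hQC (u/2) hu2.1
        simp only [mem_setOf_eq] at *
        linarith
    exact haF.trans (le_ciSup hbddF n)
  · exact ciSup_le (fun n => le_csSup ⟨C, hAub⟩ (hFA n))



/-- Bressan's error estimate: for a Lipschitz semigroup `S`
with constant `L` on a metric space `D` and a Lipschitz map `w : [0,T] → D`,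
`d(w(t), S_t w(0)) ≤ L·∫₀ᵗ liminf_{h→0⁺} d(w(s+h), S_h w(s))/h ds` for every
`t ∈ [0,T]`. -/
theorem stmt16 {D : Type*} [MetricSpace D]
    (S : ℝ → D → D) (L : ℝ) (hL : 0 ≤ L) (T : ℝ) (hT : 0 < T)
    (hS0 : ∀ u, S 0 u = u)
    (hSsemi : ∀ s ≥ (0:ℝ), ∀ t ≥ (0:ℝ), ∀ u, S t (S s u) = S (t + s) u)
    (hSLip : ∀ t ≥ (0:ℝ), ∀ u u', dist (S t u) (S t u') ≤ L * dist u u')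
    (hStime : ∀ s ≥ (0:ℝ), ∀ t ≥ (0:ℝ), ∀ u, dist (S t u) (S s u) ≤ L * |t - s|)
    (w : ℝ → D) (Lw : NNReal) (hw : LipschitzOnWith Lw w (Icc 0 T)) :
    ∀ t ∈ Icc (0:ℝ) T,
      dist (w t) (S t (w 0)) ≤
        L * ∫ s in (0:ℝ)..t,
          Filter.liminf (fun h => dist (w (s + h)) (S h (w s)) / h)
            (nhdsWithin 0 (Ioi 0)) := by
  intro t ht
  obtain ⟨ht0, htT⟩ := ht
  -- degenerate case L = 0
  rcases eq_or_lt_of_le hL with hL0 | hL'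
  · have h1 : dist (w t) (S t (w t)) ≤ 0 := by
      have := hStime 0 le_rfl t ht0 (w t)
      rw [hS0, ← hL0] at this
      simpa [dist_comm] using this
    have h2 : dist (S t (w t)) (S t (w 0)) ≤ 0 := by
      have := hSLip t ht0 (w t) (w 0)
      rwa [← hL0, zero_mul] at this
    have : dist (w t) (S t (w 0)) ≤ 0 :=
      (dist_triangle (w t) (S t (w t)) (S t (w 0))).trans (by linarith)
    rw [← hL0, zero_mul]
    exact this
  -- degenerate case t = 0
  rcases eq_or_lt_of_le ht0 with ht0' | ht0'
  · rw [← ht0']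
    simp [hS0]
  -- main case
  -- the projection onto [0,b]
  set P : ℝ → ℝ → ℝ := fun b s => max (min s b) 0 with hP
  have hP_mem : ∀ b : ℝ, 0 ≤ b → ∀ s, P b s ∈ Icc 0 b := by
    intro b hb s
    exact ⟨le_max_right _ _, max_le (min_le_right _ _) hb⟩
  have hP_id : ∀ b : ℝ, ∀ s ∈ Icc (0:ℝ) b, P b s = s := by
    intro b s hs
    simp only [hP]
    rw [min_eq_left hs.2, max_eq_left hs.1]
  have hP_mono : ∀ b : ℝ, Monotone (P b) := by
    intro b
    exact fun x y hxy => max_le_max (min_le_min hxy le_rfl) le_rfl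
  have hP_lip : ∀ b : ℝ, LipschitzWith 1 (P b) :=
    fun b => (LipschitzWith.id.min_const b).max_const 0
  -- the globally Lipschitz modification of w
  set v : ℝ → D := fun s => w (P T s) with hv
  have hv_eq : ∀ s ∈ Icc (0:ℝ) T, v s = w s := fun s hs => by
    simp only [hv]; rw [hP_id T s hs]
  have hv_dist : ∀ a b : ℝ, dist (v a) (v b) ≤ Lw * |a - b| := by
    intro a b
    have h1 : dist (v a) (v b) ≤ Lw * dist (P T a) (P T b) :=
      hw.dist_le_mul _ (hP_mem T hT.le a) _ (hP_mem T hT.le b)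
    have h2 : dist (P T a) (P T b) ≤ |a - b| := by
      simpa [Real.dist_eq] using (hP_lip T).dist_le_mul a b
    exact h1.trans (mul_le_mul_of_nonneg_left h2 Lw.coe_nonneg)
  have hv_cont : Continuous v := by
    have : LipschitzWith 1 (P T) := hP_lip T
    exact hw.continuousOn.comp_continuous this.continuous (fun x => hP_mem T hT.le x)
  -- basic constants
  set C : ℝ := L + Lw with hCdef
  have hC0 : 0 ≤ C := by positivity
  set M : ℝ := L * C with hMdef
  have hM0 : 0 ≤ M := by positivity
  -- the modified local error quotient
  set Q : ℝ → ℝ → ℝ := fun s h => dist (v (s + h)) (S h (v s)) / h with hQ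
  -- the liminf functions
  set f : ℝ → ℝ := fun s =>
    Filter.liminf (fun h => dist (w (s + h)) (S h (w s)) / h) (nhdsWithin 0 (Ioi 0)) with hf
  set ftil : ℝ → ℝ := fun s => Filter.liminf (Q s) (nhdsWithin 0 (Ioi 0)) with hftil
  -- time-Lipschitz bound on the semigroup trajectories
  have hS_traj : ∀ u : D, ∀ a b : ℝ, 0 ≤ a → 0 ≤ b → dist (S a u) (S b u) ≤ L * |a - b| :=
    fun u a b ha hb => hStime b hb a ha u
  have hS_from0 : ∀ u : D, ∀ b : ℝ, 0 ≤ b → dist u (S b u) ≤ L * b := by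
    intro u b hb
    have := hS_traj u 0 b le_rfl hb
    rw [hS0] at this
    simpa [abs_of_nonpos, abs_of_nonneg hb] using this
  -- bounds on Q
  have hQ0' : ∀ s h, 0 < h → 0 ≤ Q s h := fun s h hh => div_nonneg dist_nonneg hh.le
  have hQC : ∀ s h, 0 < h → Q s h ≤ C := by
    intro s h hh
    rw [div_le_iff₀ hh]
    calc dist (v (s + h)) (S h (v s))
        ≤ dist (v (s + h)) (v s) + dist (v s) (S h (v s)) := dist_triangle _ _ _
      _ ≤ Lw * |s + h - s| + L * h := add_le_add (hv_dist _ _) (hS_from0 _ h hh.le)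
      _ = C * h := by rw [show s + h - s = h by ring, abs_of_nonneg hh.le]; ring
  -- continuity of Q in h
  have hQcont : ∀ s, ContinuousOn (Q s) (Ioi 0) := by
    intro s
    have c1 : Continuous fun h : ℝ => v (s + h) := hv_cont.comp (continuous_const.add continuous_id)
    have c2 : ContinuousOn (fun h : ℝ => S h (v s)) (Ioi 0) := by
      have : LipschitzOnWith (Real.toNNReal L) (fun h : ℝ => S h (v s)) (Ici 0) := by
        rw [lipschitzOnWith_iff_dist_le_mul]
        intro x hx y hy
        have := hS_traj (v s) x y hx hy
        rw [Real.dist_eq]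
        exact this.trans (by
          rw [Real.coe_toNNReal L hL])
      exact (this.continuousOn).mono Ioi_subset_Ici_self
    exact ((continuous_dist.comp_continuousOn (c1.continuousOn.prodMk c2)).div
      continuousOn_id (fun x hx => ne_of_gt hx))
  -- representation of ftil and measurability
  have hftil_rep : ∀ s, ftil s =
      ⨆ n : ℕ, ⨅ p : ℚ, if 0 < (p:ℝ) ∧ (p:ℝ) < 1/((n:ℝ)+1) then Q s p else C + 1 :=
    fun s => aux_liminf_rep (Q s) C (hQcont s) (hQ0' s) (hQC s)
  have hftil_meas : Measurable ftil := by
    rw [show ftil = fun s => ⨆ n : ℕ, ⨅ p : ℚ,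
        if 0 < (p:ℝ) ∧ (p:ℝ) < 1/((n:ℝ)+1) then Q s p else C + 1 from funext hftil_rep]
    refine Measurable.iSup (fun n => Measurable.iInf (fun p => ?_))
    by_cases hc : 0 < (p:ℝ) ∧ (p:ℝ) < 1/((n:ℝ)+1)
    · simp only [if_pos hc]
      have c1 : Continuous fun s : ℝ => v (s + p) :=
        hv_cont.comp (continuous_id.add continuous_const)
      have c2 : Continuous fun s : ℝ => S (p:ℝ) (v s) := by
        have : LipschitzWith (Real.toNNReal L) (fun u : D => S (p:ℝ) u) := by
          apply LipschitzWith.of_dist_le_mul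
          intro u u'
          exact (hSLip (p:ℝ) hc.1.le u u').trans (by rw [Real.coe_toNNReal L hL])
        exact this.continuous.comp hv_cont
      exact ((c1.dist c2).div_const _).measurable
    · simp only [if_neg hc]
      exact measurable_const
  -- bounds on ftil
  have hftil_bounds : ∀ s, 0 ≤ ftil s ∧ ftil s ≤ C := by
    intro s
    set ψ : ℕ → ℚ → ℝ := fun n p =>
      if 0 < (p:ℝ) ∧ (p:ℝ) < 1/((n:ℝ)+1) then Q s p else C + 1 with hψ'
    have hψ_nonneg : ∀ n p, 0 ≤ ψ n p := by
      intro n p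
      by_cases hc : 0 < (p:ℝ) ∧ (p:ℝ) < 1/((n:ℝ)+1)
      · simp only [hψ']; rw [if_pos hc]; exact hQ0' s _ hc.1
      · simp only [hψ']; rw [if_neg hc]; linarith
    have hbdd : ∀ n, BddBelow (range (ψ n)) :=
      fun n => ⟨0, by rintro y ⟨p, rfl⟩; exact hψ_nonneg n p⟩
    have hFC : ∀ n, (⨅ p : ℚ, ψ n p) ≤ C := by
      intro n
      have hn : (0:ℝ) < 1/((n:ℝ)+1) := by positivity
      obtain ⟨p, hp1, hp2⟩ := exists_rat_btwn hn
      refine (ciInf_le (hbdd n) p).trans ?_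
      simp only [hψ']; rw [if_pos ⟨hp1, hp2⟩]
      exact hQC s _ hp1
    have hbddA : BddAbove (range fun n => ⨅ p : ℚ, ψ n p) :=
      ⟨C, by rintro y ⟨n, rfl⟩; exact hFC n⟩
    rw [hftil_rep s]
    constructor
    · refine le_trans (le_ciInf (fun p => hψ_nonneg 0 p)) (le_ciSup hbddA 0)
    · exact ciSup_le hFC
  -- ftil agrees with f on [0,T)
  have hgerm : ∀ s, 0 ≤ s → s < T → f s = ftil s := by
    intro s hs0 hsT
    refine liminf_congr ?_
    have : Ioo (0:ℝ) (T - s) ∈ nhdsWithin (0:ℝ) (Ioi 0) :=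
      Ioo_mem_nhdsGT_of_mem ⟨le_rfl, by linarith⟩
    filter_upwards [this] with h hh
    have h1 : v (s + h) = w (s + h) := hv_eq _ ⟨by linarith [hh.1], by linarith [hh.2]⟩
    have h2 : v s = w s := hv_eq _ ⟨hs0, hsT.le⟩
    simp only [hQ, h1, h2]
  -- the auxiliary function g
  set g0 : ℝ → ℝ := fun s => dist (S (t - s) (w s)) (S t (w 0)) with hg0
  set g : ℝ → ℝ := fun s => g0 (P t s) with hg
  have hg_eq : ∀ s ∈ Icc (0:ℝ) t, g s = g0 s := fun s hs => by
    simp only [hg]; rw [hP_id t s hs]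
  -- key semigroup estimate
  have hK : ∀ a b : ℝ, 0 ≤ a → a ≤ b → b ≤ t →
      |g0 b - g0 a| ≤ L * dist (w b) (S (b - a) (w a)) := by
    intro a b ha hab hbt
    have e1 : S (t - a) (w a) = S (t - b) (S (b - a) (w a)) := by
      rw [hSsemi (b - a) (by linarith) (t - b) (by linarith)]
      ring_nf
    calc |g0 b - g0 a| ≤ dist (S (t - b) (w b)) (S (t - a) (w a)) := abs_dist_sub_le _ _ _
      _ = dist (S (t - b) (w b)) (S (t - b) (S (b - a) (w a))) := by rw [e1]
      _ ≤ L * dist (w b) (S (b - a) (w a)) := hSLip (t - b) (by linarith) _ _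
  have hK2 : ∀ a b : ℝ, 0 ≤ a → a ≤ b → b ≤ t →
      dist (w b) (S (b - a) (w a)) ≤ C * (b - a) := by
    intro a b ha hab hbt
    have h1 : dist (w b) (w a) ≤ Lw * (b - a) := by
      have := hw.dist_le_mul b ⟨by linarith, by linarith⟩ a ⟨ha, by linarith⟩
      rwa [Real.dist_eq, abs_of_nonneg (by linarith)] at this
    have h2 : dist (w a) (S (b - a) (w a)) ≤ L * (b - a) := hS_from0 _ _ (by linarith)
    calc dist (w b) (S (b - a) (w a))
        ≤ dist (w b) (w a) + dist (w a) (S (b - a) (w a)) := dist_triangle _ _ _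
      _ ≤ C * (b - a) := by rw [hCdef]; nlinarith
  have hglip : ∀ a b : ℝ, a ≤ b → |g b - g a| ≤ M * (b - a) := by
    intro a b hab
    have hpa := hP_mem t ht0'.le a
    have hpb := hP_mem t ht0'.le b
    have hmono := hP_mono t hab
    have hlip : P t b - P t a ≤ b - a := by
      have h := (hP_lip t).dist_le_mul b a
      rw [Real.dist_eq, Real.dist_eq, NNReal.coe_one, one_mul] at h
      have h2 : P t b - P t a ≤ |b - a| := (le_abs_self _).trans h
      rwa [abs_of_nonneg (by linarith : (0:ℝ) ≤ b - a)] at h2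
    calc |g b - g a| = |g0 (P t b) - g0 (P t a)| := by simp only [hg]
      _ ≤ L * dist (w (P t b)) (S (P t b - P t a) (w (P t a))) :=
          hK _ _ hpa.1 hmono hpb.2
      _ ≤ L * (C * (P t b - P t a)) :=
          mul_le_mul_of_nonneg_left (hK2 _ _ hpa.1 hmono hpb.2) hL
      _ ≤ M * (b - a) := by rw [hMdef]; nlinarith [hP_mono t hab]
  -- g is Lipschitz, hence continuous
  have hgcont : Continuous g := by
    have hlip : LipschitzWith (Real.toNNReal M) g := by
      apply LipschitzWith.of_dist_le_mul
      intro a b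
      rw [Real.dist_eq, Real.dist_eq, Real.coe_toNNReal M hM0]
      rcases le_total a b with h | h
      · rw [abs_sub_comm (g a), abs_sub_comm a b, abs_of_nonneg (sub_nonneg.2 h)]
        exact hglip a b h
      · rw [abs_of_nonneg (sub_nonneg.2 h)]
        exact hglip b a h
    exact hlip.continuous
  -- the monotone companion function G
  set G : ℝ → ℝ := fun x => M * x - g x with hG
  have hGmono : Monotone G := by
    intro a b hab
    have h1 := hglip a b hab
    have h2 := (le_abs_self (g b - g a)).trans h1
    simp only [hG]
    linarith
  have hGcont : Continuous G := (continuous_const.mul continuous_id).sub hgcont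
  set Γ : StieltjesFunction ℝ := ⟨G, hGmono, fun x => hGcont.continuousWithinAt⟩ with hΓ
  set μ : Measure ℝ := Γ.measure with hμ
  set dd : ℝ → ENNReal := μ.rnDeriv volume with hdd
  have hderivG : ∀ᵐ x, HasDerivAt G ((dd x).toReal) x := Γ.ae_hasDerivAt
  have hddmeas : Measurable dd := Measure.measurable_rnDeriv μ volume
  have hddlt : ∀ᵐ x, dd x < ⊤ := Measure.rnDeriv_lt_top μ volume
  have hGt0 : 0 ≤ G t - G 0 := by
    have := hGmono ht0'.le
    linarith
  have hlint : ∫⁻ x in Ioc 0 t, dd x ≤ ENNReal.ofReal (G t - G 0) := by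
    refine le_trans (Measure.setLIntegral_rnDeriv_le _) ?_
    rw [hμ, Γ.measure_Ioc]
  have key1 : ∫ x in Ioc 0 t, (dd x).toReal ≤ G t - G 0 := by
    rw [integral_toReal (hddmeas.aemeasurable.restrict) (ae_restrict_of_ae hddlt)]
    calc (∫⁻ x in Ioc 0 t, dd x).toReal
        ≤ (ENNReal.ofReal (G t - G 0)).toReal :=
          ENNReal.toReal_mono (by simp) hlint
      _ = G t - G 0 := ENNReal.toReal_ofReal hGt0
  have hd_int : IntegrableOn (fun x => (dd x).toReal) (Ioc 0 t) volume := by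
    apply integrable_toReal_of_lintegral_ne_top (hddmeas.aemeasurable.restrict)
    exact ne_of_lt (lt_of_le_of_lt hlint ENNReal.ofReal_lt_top)
  -- the pointwise derivative bound
  have hkey : ∀ x, x ∈ Ioo 0 t → ∀ c : ℝ, HasDerivAt g c x → c ≤ L * ftil x := by
    intro x hx c hc
    have hslope : Tendsto (fun h : ℝ => (g (x + h) - g x) / h)
        (nhdsWithin 0 (Ioi 0)) (nhds c) := by
      have h1 := hasDerivAt_iff_tendsto_slope.1 hc
      have h2 : Tendsto (fun h : ℝ => x + h) (nhdsWithin 0 (Ioi 0))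
          (nhdsWithin x {x}ᶜ) := by
        rw [tendsto_nhdsWithin_iff]
        constructor
        · have h3 : Tendsto (fun h : ℝ => x + h) (nhds 0) (nhds (x + 0)) :=
            (continuous_const.add continuous_id).tendsto 0
          rw [add_zero] at h3
          exact h3.mono_left nhdsWithin_le_nhds
        · filter_upwards [self_mem_nhdsWithin] with h hh
          simp only [mem_compl_iff, mem_singleton_iff]
          intro hfalse
          have : h = 0 := by linarith [hfalse.symm.le, hfalse.le]
          exact absurd this (ne_of_gt hh)
      have h3 := h1.comp h2
      have h4 : (slope g x) ∘ (fun h : ℝ => x + h) =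
          fun h : ℝ => (g (x + h) - g x) / h := by
        funext h
        simp only [Function.comp_apply, slope_def_field, add_sub_cancel_left]
      rwa [h4] at h3
    have hlim1 : liminf (fun h : ℝ => (g (x + h) - g x) / h)
        (nhdsWithin (0:ℝ) (Ioi 0)) = c := hslope.liminf_eq
    have hev : ∀ᶠ h in nhdsWithin (0:ℝ) (Ioi 0),
        (g (x + h) - g x) / h ≤ L * Q x h := by
      have hm : Ioo (0:ℝ) (t - x) ∈ nhdsWithin (0:ℝ) (Ioi 0) :=
        Ioo_mem_nhdsGT_of_mem ⟨le_rfl, sub_pos.2 hx.2⟩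
      filter_upwards [hm] with h hh
      have hxt : x + h ∈ Icc (0:ℝ) t := ⟨by linarith [hx.1, hh.1], by linarith [hh.2]⟩
      have e1 : g (x + h) = g0 (x + h) := hg_eq _ hxt
      have e2 : g x = g0 x := hg_eq _ ⟨hx.1.le, hx.2.le⟩
      have hKx := hK x (x + h) hx.1.le (by linarith [hh.1]) hxt.2
      rw [show x + h - x = h by ring] at hKx
      have hQx : dist (w (x + h)) (S h (w x)) = dist (v (x + h)) (S h (v x)) := by
        rw [hv_eq (x + h) ⟨hxt.1, hxt.2.trans htT⟩, hv_eq x ⟨hx.1.le, hx.2.le.trans htT⟩]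
      have h4 : g (x + h) - g x ≤ L * dist (v (x + h)) (S h (v x)) := by
        rw [e1, e2, ← hQx]
        exact (le_abs_self _).trans hKx
      have h5 : (g (x + h) - g x) / h ≤ (L * dist (v (x + h)) (S h (v x))) / h := by
        gcongr
        exact hh.1.le
      have h6 : (L * dist (v (x + h)) (S h (v x))) / h = L * Q x h := by
        simp only [hQ]
        ring
      linarith
    have hstep : c ≤ liminf (fun h : ℝ => L * Q x h) (nhdsWithin (0:ℝ) (Ioi 0)) := by
      rw [← hlim1]
      refine liminf_le_liminf hev ?_ ?_
      · refine ⟨-M, ?_⟩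
        rw [eventually_map]
        filter_upwards [self_mem_nhdsWithin] with h hh
        have hhh : (0:ℝ) < h := hh
        have h7 := hglip x (x + h) (by linarith)
        rw [show x + h - x = h by ring] at h7
        have h8 := (abs_le.1 h7).1
        rw [ge_iff_le, le_div_iff₀ hhh]
        nlinarith
      · apply IsBoundedUnder.isCoboundedUnder_ge
        refine ⟨L * C, ?_⟩
        rw [eventually_map]
        filter_upwards [self_mem_nhdsWithin] with h hh
        exact mul_le_mul_of_nonneg_left (hQC x h hh) hL
    have hb1 : IsBoundedUnder (· ≥ ·) (nhdsWithin (0:ℝ) (Ioi 0)) (Q x) := by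
      refine ⟨0, ?_⟩
      rw [eventually_map]
      filter_upwards [self_mem_nhdsWithin] with h hh
      exact hQ0' x h hh
    have hb2 : IsBoundedUnder (· ≤ ·) (nhdsWithin (0:ℝ) (Ioi 0)) (Q x) := by
      refine ⟨C, ?_⟩
      rw [eventually_map]
      filter_upwards [self_mem_nhdsWithin] with h hh
      exact hQC x h hh
    have hb3 : IsBoundedUnder (· ≥ ·) (nhdsWithin (0:ℝ) (Ioi 0))
        (fun h => (OrderIso.mulLeft₀ L hL') (Q x h)) := by
      refine ⟨0, ?_⟩
      rw [eventually_map]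
      filter_upwards [self_mem_nhdsWithin] with h hh
      simp only [OrderIso.mulLeft₀_apply]
      exact mul_nonneg hL (hQ0' x h hh)
    have hb4 : IsBoundedUnder (· ≤ ·) (nhdsWithin (0:ℝ) (Ioi 0))
        (fun h => (OrderIso.mulLeft₀ L hL') (Q x h)) := by
      refine ⟨L * C, ?_⟩
      rw [eventually_map]
      filter_upwards [self_mem_nhdsWithin] with h hh
      simp only [OrderIso.mulLeft₀_apply]
      exact mul_le_mul_of_nonneg_left (hQC x h hh) hL
    have hmul := (OrderIso.mulLeft₀ L hL').liminf_apply
      (f := nhdsWithin (0:ℝ) (Ioi 0)) (u := Q x)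
      hb1 hb2.isCoboundedUnder_ge hb3 hb4.isCoboundedUnder_ge
    simp only [OrderIso.mulLeft₀_apply] at hmul
    rw [hftil]
    rw [← hmul] at hstep
    exact hstep
  -- a.e. x ≠ value lemmas
  have hne_t : ∀ᵐ x : ℝ, x ≠ t := by
    have h0 : volume ({t} : Set ℝ) = 0 := measure_singleton t
    have := measure_eq_zero_iff_ae_notMem.1 h0
    filter_upwards [this] with x hx
    simpa [mem_singleton_iff] using hx
  have hne_T : ∀ᵐ x : ℝ, x ≠ T := by
    have h0 : volume ({T} : Set ℝ) = 0 := measure_singleton T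
    have := measure_eq_zero_iff_ae_notMem.1 h0
    filter_upwards [this] with x hx
    simpa [mem_singleton_iff] using hx
  -- the a.e. derivative comparison on Ioc 0 t
  have hae : ∀ᵐ x ∂(volume.restrict (Ioc 0 t)),
      M - (dd x).toReal ≤ L * ftil x := by
    filter_upwards [ae_restrict_mem measurableSet_Ioc, ae_restrict_of_ae hderivG,
      ae_restrict_of_ae hne_t] with x hx hGx hxt
    have hgd : HasDerivAt g (M - (dd x).toReal) x := by
      have hid : HasDerivAt (fun y : ℝ => M * y) M x := by
        simpa using (hasDerivAt_id x).const_mul M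
      have := hid.sub hGx
      have hfun : (fun y : ℝ => M * y - G y) = g := by
        funext y
        simp only [hG]
        ring
      rw [← hfun]; exact this
    exact hkey x ⟨hx.1, lt_of_le_of_ne hx.2 hxt⟩ _ hgd
  -- integrability
  have hfint : IntegrableOn (fun x => L * ftil x) (Ioc 0 t) volume := by
    apply Integrable.mono' (g := fun _ => L * C)
      (integrableOn_const measure_Ioc_lt_top.ne)
      ((hftil_meas.const_mul L).aestronglyMeasurable)
    refine ae_of_all _ (fun x => ?_)
    rw [Real.norm_eq_abs, abs_of_nonneg (mul_nonneg hL (hftil_bounds x).1)]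
    exact mul_le_mul_of_nonneg_left (hftil_bounds x).2 hL
  have hMconst : IntegrableOn (fun _ : ℝ => M) (Ioc 0 t) volume :=
    integrableOn_const measure_Ioc_lt_top.ne
  have hMint : IntegrableOn (fun x => M - (dd x).toReal) (Ioc 0 t) volume :=
    hMconst.sub hd_int
  -- the main estimate
  have hLHS : dist (w t) (S t (w 0)) = g t - g 0 := by
    have h1 : g t = dist (w t) (S t (w 0)) := by
      rw [hg_eq t ⟨ht0, le_rfl⟩]
      simp only [hg0]
      rw [sub_self, hS0]
    have h2 : g 0 = 0 := by
      rw [hg_eq 0 ⟨le_rfl, ht0⟩]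
      simp only [hg0]
      rw [sub_zero, dist_self]
    rw [h1, h2, sub_zero]
  have step : g t - g 0 ≤ L * ∫ x in Ioc 0 t, ftil x := by
    have e0 : g t - g 0 = M * t - (G t - G 0) := by
      simp only [hG]
      ring
    have e1 : ∫ x in Ioc (0:ℝ) t, (M - (dd x).toReal) ∂volume
        = M * t - ∫ x in Ioc 0 t, (dd x).toReal := by
      rw [integral_sub hMconst hd_int, setIntegral_const]
      rw [Real.volume_real_Ioc_of_le (by linarith : (0:ℝ) ≤ t)]
      rw [smul_eq_mul]
      ring
    calc g t - g 0 = M * t - (G t - G 0) := e0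
      _ ≤ M * t - ∫ x in Ioc 0 t, (dd x).toReal := by linarith [key1]
      _ = ∫ x in Ioc (0:ℝ) t, (M - (dd x).toReal) ∂volume := e1.symm
      _ ≤ ∫ x in Ioc (0:ℝ) t, L * ftil x ∂volume :=
          setIntegral_mono_ae_restrict hMint hfint hae
      _ = L * ∫ x in Ioc (0:ℝ) t, ftil x ∂volume := integral_const_mul L ftil
  have hcong : ∫ x in Ioc (0:ℝ) t, ftil x ∂volume = ∫ x in Ioc (0:ℝ) t, f x ∂volume := by
    apply setIntegral_congr_ae measurableSet_Ioc
    filter_upwards [hne_T] with x hxT hx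
    exact (hgerm x hx.1.le (lt_of_le_of_ne (hx.2.trans htT) hxT)).symm
  rw [intervalIntegral.integral_of_le ht0]
  rw [hLHS]
  calc g t - g 0 ≤ L * ∫ x in Ioc (0:ℝ) t, ftil x ∂volume := step
    _ = L * ∫ x in Ioc (0:ℝ) t, f x ∂volume := by rw [hcong]
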